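/- Let m, m0, m1 be positive integers, q ∈ ℝ^m, A0 an m0×m real matrix, d0 ∈ ℝ^{m0}, A1 an m1×m real matrix, and d1 ∈ ℝ^{m1}. Let P := {p ∈ ℝ^m : p_j ≥ 0 for all j, ∑_{j=1}^m p_j = 1, A0 p = d0, A1 p ≤ d1 componentwise}. Assume the Slater condition: there exists p̄ with p̄_j > 0 for all j, ∑_j p̄_j = 1, A0 p̄ = d0, and (A1 p̄)_i < (d1)_i for every i. Then the optimal values agree: inf_{p ∈ P} ⟨p, q⟩ = sup { min_{1≤j≤m} ( q + A0ᵀ v + A1ᵀ λ )_j − ⟨v, d0⟩ − ⟨λ, d1⟩ : v ∈ ℝ^{m0}, λ ∈ ℝ^{m1}, λ ≥ 0 componentwise }. -/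

import Mathlib

open Filter Set Pointwise

private lemma lp_aux_nonneg (a c d : ℝ) (h : ∀ r : ℝ, 0 ≤ r → c < a + r * d) : 0 ≤ d := by
  by_contra hd
  push_neg at hd
  have h0 : c < a := by have := h 0 le_rfl; linarith
  have hr : 0 ≤ (c - a) / d := le_of_lt (div_pos_of_neg_of_neg (by linarith) hd)
  have h2 := h _ hr
  rw [div_mul_cancel₀ _ (ne_of_lt hd)] at h2
  linarith

private lemma lp_clm_decomp {m0 m1 : ℕ}
    (g : ((Fin m0 → ℝ) × (Fin m1 → ℝ) × ℝ) →L[ℝ] ℝ)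
    (z : (Fin m0 → ℝ) × (Fin m1 → ℝ) × ℝ) :
    g z = (∑ i, z.1 i * g (Pi.single i 1, 0, 0))
        + (∑ i, z.2.1 i * g (0, Pi.single i 1, 0)) + z.2.2 * g (0, 0, 1) := by
  have hz : z = (∑ i, z.1 i • ((Pi.single i 1 : Fin m0 → ℝ), (0 : Fin m1 → ℝ), (0:ℝ)))
      + (∑ i, z.2.1 i • ((0 : Fin m0 → ℝ), (Pi.single i 1 : Fin m1 → ℝ), (0:ℝ)))
      + z.2.2 • (((0 : Fin m0 → ℝ), (0 : Fin m1 → ℝ), (1:ℝ))) := by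
    have e : ∀ (n : ℕ) (w : Fin n → ℝ), ∑ i, w i • (Pi.single i 1 : Fin n → ℝ) = w := by
      intro n w
      funext j
      simp [Pi.single_apply]
    refine Prod.ext ?_ (Prod.ext ?_ ?_)
    · simp [Prod.fst_sum, e]
    · simp [Prod.snd_sum, Prod.fst_sum, e]
    · simp [Prod.snd_sum]
  conv_lhs => rw [hz]
  simp only [map_add, map_sum, map_smul, smul_eq_mul]

set_option maxHeartbeats 1000000 in
/-- Strong LP duality for the worst-case expected log-growth problem over a
polyhedral ambiguity set, under a Slater condition. -/
theorem robust_log_optimal_strong_duality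
    (m m0 m1 : ℕ) (hm : 0 < m) (hm0 : 0 < m0) (hm1 : 0 < m1)
    (q : Fin m → ℝ)
    (A0 : Matrix (Fin m0) (Fin m) ℝ) (d0 : Fin m0 → ℝ)
    (A1 : Matrix (Fin m1) (Fin m) ℝ) (d1 : Fin m1 → ℝ)
    (slater : ∃ pbar : Fin m → ℝ,
      (∀ j, 0 < pbar j) ∧ (∑ j, pbar j) = 1 ∧
      A0.mulVec pbar = d0 ∧ (∀ i, A1.mulVec pbar i < d1 i)) :
    sInf {y : ℝ | ∃ p : Fin m → ℝ,
        (∀ j, 0 ≤ p j) ∧ (∑ j, p j) = 1 ∧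
        A0.mulVec p = d0 ∧ (∀ i, A1.mulVec p i ≤ d1 i) ∧
        y = ∑ j, p j * q j}
      =
    sSup {y : ℝ | ∃ (v : Fin m0 → ℝ) (lam : Fin m1 → ℝ),
        (∀ i, 0 ≤ lam i) ∧
        y = (⨅ j : Fin m, (q j + A0.transpose.mulVec v j + A1.transpose.mulVec lam j))
              - (∑ i, v i * d0 i) - (∑ i, lam i * d1 i)} := by
  obtain ⟨pbar, hpbar_pos, hpbar_sum, hpbar_eq, hpbar_lt⟩ := slater
  haveI : Nonempty (Fin m) := ⟨⟨0, hm⟩⟩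
  set Pset : Set ℝ := {y : ℝ | ∃ p : Fin m → ℝ,
        (∀ j, 0 ≤ p j) ∧ (∑ j, p j) = 1 ∧
        A0.mulVec p = d0 ∧ (∀ i, A1.mulVec p i ≤ d1 i) ∧
        y = ∑ j, p j * q j} with hPset
  set Dset : Set ℝ := {y : ℝ | ∃ (v : Fin m0 → ℝ) (lam : Fin m1 → ℝ),
        (∀ i, 0 ≤ lam i) ∧
        y = (⨅ j : Fin m, (q j + A0.transpose.mulVec v j + A1.transpose.mulVec lam j))
              - (∑ i, v i * d0 i) - (∑ i, lam i * d1 i)} with hDset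
  -- basic memberships
  have hPmem : (∑ j, pbar j * q j) ∈ Pset :=
    ⟨pbar, fun j => (hpbar_pos j).le, hpbar_sum, hpbar_eq, fun i => (hpbar_lt i).le, rfl⟩
  have hPne : Pset.Nonempty := ⟨_, hPmem⟩
  -- weak duality
  have weak : ∀ y ∈ Dset, ∀ x ∈ Pset, y ≤ x := by
    rintro y ⟨v, lam, hlam, rfl⟩ x ⟨p, hp0, hp1, hpA0, hpA1, rfl⟩
    have hbdd : BddBelow (Set.range fun j : Fin m =>
        q j + A0.transpose.mulVec v j + A1.transpose.mulVec lam j) :=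
      Finite.bddBelow_range _
    have h1 : (⨅ j : Fin m, (q j + A0.transpose.mulVec v j + A1.transpose.mulVec lam j))
        ≤ ∑ j, p j * (q j + A0.transpose.mulVec v j + A1.transpose.mulVec lam j) := by
      calc (⨅ j : Fin m, (q j + A0.transpose.mulVec v j + A1.transpose.mulVec lam j))
          = (∑ j, p j) * (⨅ j : Fin m, (q j + A0.transpose.mulVec v j + A1.transpose.mulVec lam j)) := by
            rw [hp1, one_mul]
        _ = ∑ j, p j * (⨅ j : Fin m, (q j + A0.transpose.mulVec v j + A1.transpose.mulVec lam j)) :=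
            Finset.sum_mul ..
        _ ≤ ∑ j, p j * (q j + A0.transpose.mulVec v j + A1.transpose.mulVec lam j) :=
            Finset.sum_le_sum fun j _ => mul_le_mul_of_nonneg_left (ciInf_le hbdd j) (hp0 j)
    have hswap : ∀ (n : ℕ) (B : Matrix (Fin n) (Fin m) ℝ) (w : Fin n → ℝ),
        ∑ j, p j * B.transpose.mulVec w j = ∑ i, w i * B.mulVec p i := by
      intro n B w
      simp only [Matrix.mulVec, dotProduct, Matrix.transpose_apply, Finset.mul_sum]
      rw [Finset.sum_comm]
      exact Finset.sum_congr rfl fun i _ => Finset.sum_congr rfl fun j _ => by ring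
    have h2 : ∑ j, p j * (q j + A0.transpose.mulVec v j + A1.transpose.mulVec lam j)
        = (∑ j, p j * q j) + (∑ i, v i * d0 i) + (∑ i, lam i * A1.mulVec p i) := by
      simp only [mul_add, Finset.sum_add_distrib]
      rw [hswap m0 A0 v, hswap m1 A1 lam, hpA0]
    have h3 : ∑ i, lam i * A1.mulVec p i ≤ ∑ i, lam i * d1 i :=
      Finset.sum_le_sum fun i _ => mul_le_mul_of_nonneg_left (hpA1 i) (hlam i)
    rw [h2] at h1
    linarith
  have hD0 : ((⨅ j : Fin m, (q j + A0.transpose.mulVec 0 j + A1.transpose.mulVec 0 j))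
      - (∑ i, (0:ℝ) * d0 i) - (∑ i, (0:ℝ) * d1 i)) ∈ Dset :=
    ⟨0, 0, fun _ => le_rfl, rfl⟩
  have hDne : Dset.Nonempty := ⟨_, hD0⟩
  have hDbdd : BddAbove Dset := ⟨∑ j, pbar j * q j, fun y hy => weak y hy _ hPmem⟩
  have hPbdd : BddBelow Pset := ⟨_, fun x hx => weak _ hD0 x hx⟩
  have le1 : sSup Dset ≤ sInf Pset :=
    le_csInf hPne fun x hx => csSup_le hDne fun y hy => weak y hy x hx
  have le2 : sInf Pset ≤ sSup Dset := by
    refine le_of_forall_lt fun t ht => ?_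
    classical
    set lq : (Fin m → ℝ) →ₗ[ℝ] ℝ :=
      { toFun := fun p => ∑ j, p j * q j
        map_add' := fun x y => by simp [add_mul, Finset.sum_add_distrib]
        map_smul' := fun r x => by simp [Finset.mul_sum, mul_assoc] } with hlq
    set L : (Fin m → ℝ) →ₗ[ℝ] ((Fin m0 → ℝ) × (Fin m1 → ℝ) × ℝ) :=
      A0.mulVecLin.prod (A1.mulVecLin.prod lq) with hL
    have hLapp : ∀ p : Fin m → ℝ, L p = (A0.mulVec p, A1.mulVec p, ∑ j, p j * q j) :=
      fun p => rfl
    set cvec : (Fin m0 → ℝ) × (Fin m1 → ℝ) × ℝ := (-d0, -d1, 0) with hcvec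
    set K : Set ((Fin m0 → ℝ) × (Fin m1 → ℝ) × ℝ) :=
      {z | z.1 = 0 ∧ (∀ i, 0 ≤ z.2.1 i) ∧ 0 ≤ z.2.2} with hK
    set CS : Set ((Fin m0 → ℝ) × (Fin m1 → ℝ) × ℝ) :=
      (fun z => cvec + z) '' (L '' stdSimplex ℝ (Fin m)) with hCS
    set C : Set ((Fin m0 → ℝ) × (Fin m1 → ℝ) × ℝ) := CS + K with hC
    have hmemC : ∀ z, z ∈ C ↔
        ∃ p ∈ stdSimplex ℝ (Fin m), ∃ k ∈ K, cvec + L p + k = z := by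
      intro z
      constructor
      · rintro ⟨x, hx, k, hk, rfl⟩
        obtain ⟨w, ⟨p, hp, rfl⟩, rfl⟩ := hx
        exact ⟨p, hp, k, hk, rfl⟩
      · rintro ⟨p, hp, k, hk, rfl⟩
        exact ⟨cvec + L p, ⟨L p, ⟨p, hp, rfl⟩, rfl⟩, k, hk, rfl⟩
    have hKconv : Convex ℝ K := by
      rintro x ⟨hx1, hx2, hx3⟩ y ⟨hy1, hy2, hy3⟩ a b ha hb hab
      refine ⟨?_, fun i => ?_, ?_⟩
      · show (a • x + b • y).1 = 0
        simp [hx1, hy1]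
      · show (0:ℝ) ≤ (a • x + b • y).2.1 i
        simp only [Prod.snd_add, Prod.smul_snd, Prod.fst_add, Prod.smul_fst, Pi.add_apply,
          Pi.smul_apply, smul_eq_mul]
        exact add_nonneg (mul_nonneg ha (hx2 i)) (mul_nonneg hb (hy2 i))
      · show (0:ℝ) ≤ (a • x + b • y).2.2
        simp only [Prod.snd_add, Prod.smul_snd, smul_eq_mul]
        exact add_nonneg (mul_nonneg ha hx3) (mul_nonneg hb hy3)
    have hCconv : Convex ℝ C := by
      rw [hC, hCS]
      exact ((((convex_stdSimplex ℝ (Fin m)).linear_image L).translate cvec)).add hKconv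
    have hKclosed : IsClosed K := by
      have h1 : IsClosed {z : (Fin m0 → ℝ) × (Fin m1 → ℝ) × ℝ | z.1 = 0} :=
        isClosed_eq continuous_fst continuous_const
      have h2 : ∀ i, IsClosed {z : (Fin m0 → ℝ) × (Fin m1 → ℝ) × ℝ | 0 ≤ z.2.1 i} :=
        fun i => isClosed_le continuous_const
          ((continuous_apply i).comp (continuous_fst.comp continuous_snd))
      have h3 : IsClosed {z : (Fin m0 → ℝ) × (Fin m1 → ℝ) × ℝ | 0 ≤ z.2.2} :=
        isClosed_le continuous_const (continuous_snd.comp continuous_snd)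
      have : K = {z : (Fin m0 → ℝ) × (Fin m1 → ℝ) × ℝ | z.1 = 0}
          ∩ ((⋂ i, {z : (Fin m0 → ℝ) × (Fin m1 → ℝ) × ℝ | 0 ≤ z.2.1 i})
            ∩ {z : (Fin m0 → ℝ) × (Fin m1 → ℝ) × ℝ | 0 ≤ z.2.2}) := by
        ext z
        simp [hK, Set.mem_iInter, and_assoc]
      rw [this]
      exact h1.inter ((isClosed_iInter h2).inter h3)
    have hCScomp : IsCompact CS :=
      (((isCompact_stdSimplex ℝ (Fin m)).image L.continuous_of_finiteDimensional).image
        (continuous_const.add continuous_id))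
    have hCclosed : IsClosed C := by
      rw [hC]
      exact hKclosed.add_left_of_isCompact hCScomp
    have hz0 : (((0 : Fin m0 → ℝ), (0 : Fin m1 → ℝ), t)) ∉ C := by
      intro hmem
      rw [hmemC] at hmem
      obtain ⟨p, hpS, k, hkK, heq⟩ := hmem
      have h1 := congrArg Prod.fst heq
      have h2 := congrArg (fun z => Prod.fst (Prod.snd z)) heq
      have h3 := congrArg (fun z => Prod.snd (Prod.snd z)) heq
      simp only [hLapp, hcvec, Prod.fst_add, Prod.snd_add] at h1 h2 h3
      have hA0 : A0.mulVec p = d0 := by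
        funext i
        have := congrFun h1 i
        simp only [Pi.add_apply, Pi.neg_apply, Pi.zero_apply, hkK.1] at this
        linarith
      have hA1 : ∀ i, A1.mulVec p i ≤ d1 i := by
        intro i
        have := congrFun h2 i
        simp only [Pi.add_apply, Pi.neg_apply, Pi.zero_apply] at this
        have := hkK.2.1 i
        linarith
      have hval : (∑ j, p j * q j) + k.2.2 = t := by
        simpa using h3
      have hx : (∑ j, p j * q j) ∈ Pset := ⟨p, hpS.1, hpS.2, hA0, hA1, rfl⟩
      have h5 := csInf_le hPbdd hx
      have h6 := hkK.2.2
      linarith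
    obtain ⟨f, u, hfC, hfz⟩ := geometric_hahn_banach_closed_point hCconv hCclosed hz0
    set g : ((Fin m0 → ℝ) × (Fin m1 → ℝ) × ℝ) →L[ℝ] ℝ := -f with hg
    have hgC : ∀ a ∈ C, -u < g a := fun a ha => by
      have := hfC a ha
      simp only [hg, ContinuousLinearMap.neg_apply]
      linarith
    have hgz : g ((0 : Fin m0 → ℝ), (0 : Fin m1 → ℝ), t) < -u := by
      simp only [hg, ContinuousLinearMap.neg_apply]
      linarith
    set v' : Fin m0 → ℝ := fun i => g (Pi.single i 1, 0, 0) with hv'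
    set l' : Fin m1 → ℝ := fun i => g (0, Pi.single i 1, 0) with hl'
    set s : ℝ := g (0, 0, 1) with hs
    have hgz_eq : g ((0 : Fin m0 → ℝ), (0 : Fin m1 → ℝ), t) = t * s := by
      rw [lp_clm_decomp g]
      simp [hs]
    have hpbarS : pbar ∈ stdSimplex ℝ (Fin m) := ⟨fun j => (hpbar_pos j).le, hpbar_sum⟩
    have hlow : ∀ k ∈ K, -u < g (cvec + L pbar + k) := fun k hk =>
      hgC _ ((hmemC _).2 ⟨pbar, hpbarS, k, hk, rfl⟩)
    -- sign conditions
    have hl'nonneg : ∀ i, 0 ≤ l' i := by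
      intro i
      apply lp_aux_nonneg (g (cvec + L pbar)) (-u)
      intro r hr
      have hsingle : ∀ i', (0:ℝ) ≤ (Pi.single i 1 : Fin m1 → ℝ) i' := by
        intro i'
        simp only [Pi.single_apply]
        split <;> norm_num
      have hk : (((0 : Fin m0 → ℝ), r • (Pi.single i 1 : Fin m1 → ℝ), (0:ℝ))) ∈ K :=
        ⟨rfl, fun i' => by
          simp only [Pi.smul_apply, smul_eq_mul]
          exact mul_nonneg hr (hsingle i'), le_rfl⟩
      have hdir : (((0 : Fin m0 → ℝ), r • (Pi.single i 1 : Fin m1 → ℝ), (0:ℝ)))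
          = r • (((0 : Fin m0 → ℝ), (Pi.single i 1 : Fin m1 → ℝ), (0:ℝ))) := by
        simp [Prod.smul_mk]
      have h := hlow _ hk
      rw [map_add, hdir, map_smul, smul_eq_mul] at h
      exact h
    have hsnonneg : 0 ≤ s := by
      apply lp_aux_nonneg (g (cvec + L pbar)) (-u)
      intro r hr
      have hk : (((0 : Fin m0 → ℝ), (0 : Fin m1 → ℝ), r)) ∈ K := ⟨rfl, fun _ => le_rfl, hr⟩
      have hdir : (((0 : Fin m0 → ℝ), (0 : Fin m1 → ℝ), r))
          = r • (((0 : Fin m0 → ℝ), (0 : Fin m1 → ℝ), (1:ℝ))) := by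
        simp [Prod.smul_mk]
      have h := hlow _ hk
      rw [map_add, hdir, map_smul, smul_eq_mul] at h
      exact h
    -- expansion of g at the Slater point
    have hgpbar : g (cvec + L pbar) = (∑ i, (A1.mulVec pbar i - d1 i) * l' i)
        + (∑ j, pbar j * q j) * s := by
      rw [lp_clm_decomp g (cvec + L pbar)]
      have e1 : (cvec + L pbar).1 = 0 := by
        simp [hcvec, hLapp, hpbar_eq]
      have e2 : ∀ i, (cvec + L pbar).2.1 i = A1.mulVec pbar i - d1 i := by
        intro i
        simp [hcvec, hLapp]
        ring
      have e3 : (cvec + L pbar).2.2 = ∑ j, pbar j * q j := by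
        simp [hcvec, hLapp]
      rw [e3]
      simp only [e1, Pi.zero_apply, zero_mul, Finset.sum_const_zero, zero_add]
      congr 1
      exact Finset.sum_congr rfl fun i _ => by rw [e2]
    have hspos : 0 < s := by
      rcases hsnonneg.lt_or_eq with h | h
      · exact h
      · exfalso
        have hu : 0 < -u := by
          rw [hgz_eq, ← h] at hgz
          simpa using hgz
        have hneg : g (cvec + L pbar) ≤ 0 := by
          rw [hgpbar, ← h]
          have : ∀ i ∈ Finset.univ, (A1.mulVec pbar i - d1 i) * l' i ≤ 0 := fun i _ =>
            mul_nonpos_of_nonpos_of_nonneg (by linarith [hpbar_lt i]) (hl'nonneg i)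
          have hsum := Finset.sum_nonpos this
          simpa using hsum
        have := hlow 0 ⟨rfl, fun _ => le_rfl, le_rfl⟩
        rw [add_zero] at this
        linarith
    -- the dual point
    set vv : Fin m0 → ℝ := fun i => v' i / s with hvv
    set ll : Fin m1 → ℝ := fun i => l' i / s with hll
    have hllnn : ∀ i, 0 ≤ ll i := fun i => div_nonneg (hl'nonneg i) hspos.le
    have hjall : ∀ j : Fin m, t < q j + A0.transpose.mulVec vv j + A1.transpose.mulVec ll j
        - (∑ i, vv i * d0 i) - (∑ i, ll i * d1 i) := by
      intro j
      have hmem := hlow 0 ⟨rfl, fun _ => le_rfl, le_rfl⟩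
      have hK0 : (0 : (Fin m0 → ℝ) × (Fin m1 → ℝ) × ℝ) ∈ K := ⟨rfl, fun _ => le_rfl, le_rfl⟩
      have hmemj := hgC _ ((hmemC _).2 ⟨Pi.single j 1, single_mem_stdSimplex ℝ j, 0, hK0, rfl⟩)
      rw [add_zero] at hmemj
      -- expand g at the vertex
      have hexp : g (cvec + L (Pi.single j 1))
          = ((∑ i, A0 i j * v' i) - ∑ i, v' i * d0 i)
          + ((∑ i, A1 i j * l' i) - ∑ i, l' i * d1 i) + q j * s := by
        rw [lp_clm_decomp g (cvec + L (Pi.single j 1))]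
        have e1 : ∀ i, (cvec + L (Pi.single j 1)).1 i = A0 i j - d0 i := by
          intro i
          simp [hcvec, hLapp, Matrix.mulVec_single]
          ring
        have e2 : ∀ i, (cvec + L (Pi.single j 1)).2.1 i = A1 i j - d1 i := by
          intro i
          simp [hcvec, hLapp, Matrix.mulVec_single]
          ring
        have e3 : (cvec + L (Pi.single j 1)).2.2 = q j := by
          simp [hcvec, hLapp, Pi.single_apply]
        have eX : (∑ i, (cvec + L (Pi.single j 1)).1 i * v' i)
            = (∑ i, A0 i j * v' i) - ∑ i, v' i * d0 i := by
          rw [← Finset.sum_sub_distrib]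
          refine Finset.sum_congr rfl fun i _ => ?_
          rw [e1 i]
          ring
        have eY : (∑ i, (cvec + L (Pi.single j 1)).2.1 i * l' i)
            = (∑ i, A1 i j * l' i) - ∑ i, l' i * d1 i := by
          rw [← Finset.sum_sub_distrib]
          refine Finset.sum_congr rfl fun i _ => ?_
          rw [e2 i]
          ring
        rw [e3, eX, eY]
      -- the strict inequality, scaled by s
      have hscaled : t * s < g (cvec + L (Pi.single j 1)) := by
        have := hgz
        rw [hgz_eq] at this
        linarith
      -- rewrite target in terms of primed variables
      have eA0 : A0.transpose.mulVec vv j = (∑ i, A0 i j * v' i) / s := by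
        simp only [Matrix.mulVec, dotProduct, Matrix.transpose_apply, hvv]
        rw [Finset.sum_div]
        exact Finset.sum_congr rfl fun i _ => by ring
      have eA1 : A1.transpose.mulVec ll j = (∑ i, A1 i j * l' i) / s := by
        simp only [Matrix.mulVec, dotProduct, Matrix.transpose_apply, hll]
        rw [Finset.sum_div]
        exact Finset.sum_congr rfl fun i _ => by ring
      have ed0 : (∑ i, vv i * d0 i) = (∑ i, v' i * d0 i) / s := by
        simp only [hvv]
        rw [Finset.sum_div]
        exact Finset.sum_congr rfl fun i _ => by ring
      have ed1 : (∑ i, ll i * d1 i) = (∑ i, l' i * d1 i) / s := by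
        simp only [hll]
        rw [Finset.sum_div]
        exact Finset.sum_congr rfl fun i _ => by ring
      rw [eA0, eA1, ed0, ed1]
      rw [hexp] at hscaled
      rw [show q j + (∑ i, A0 i j * v' i) / s + (∑ i, A1 i j * l' i) / s
          - (∑ i, v' i * d0 i) / s - (∑ i, l' i * d1 i) / s
          = q j + ((∑ i, A0 i j * v' i) + (∑ i, A1 i j * l' i)
            - (∑ i, v' i * d0 i) - (∑ i, l' i * d1 i)) / s by ring]
      have : t - q j < ((∑ i, A0 i j * v' i) + (∑ i, A1 i j * l' i)
          - (∑ i, v' i * d0 i) - (∑ i, l' i * d1 i)) / s := by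
        rw [lt_div_iff₀ hspos]
        nlinarith [hscaled]
      linarith
    obtain ⟨j0, hj0⟩ := exists_eq_ciInf_of_finite
      (f := fun j : Fin m => q j + A0.transpose.mulVec vv j + A1.transpose.mulVec ll j)
    have hymem : ((⨅ j : Fin m, (q j + A0.transpose.mulVec vv j + A1.transpose.mulVec ll j))
        - (∑ i, vv i * d0 i) - (∑ i, ll i * d1 i)) ∈ Dset := ⟨vv, ll, hllnn, rfl⟩
    have hty : t < (⨅ j : Fin m, (q j + A0.transpose.mulVec vv j + A1.transpose.mulVec ll j))
        - (∑ i, vv i * d0 i) - (∑ i, ll i * d1 i) := by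
      rw [← hj0]
      exact hjall j0
    exact lt_of_lt_of_le hty (le_csSup hDbdd hymem)
  exact le_antisymm le2 le1
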